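/- arXiv:1602.08867 — 2 statements merged into one kernel-verified Lean document; each statement's English description precedes it below -/
import Mathlib

section
/- Let w be a crossing word on an alphabet S and let f : S → T be any function. Then either the word f(w) is crossing, or there exists t in T such that the restriction w | f⁻¹({t}) is defined and crossing. -/
/-- One-step reduction of words: either an adjacent equal pair `aa` is replaced
by `a`, or (for a word of length at least two whose first and last letters are
equal) the last letter is deleted. -/
def Step {S : Type*} (w v : List S) : Prop :=
  (∃ (u₁ : List S) (a : S) (u₂ : List S), w = u₁ ++ [a, a] ++ u₂ ∧ v = u₁ ++ [a] ++ u₂) ∨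
  (2 ≤ w.length ∧ w.head? = w.getLast? ∧ v = w.dropLast)

/-- A word is reduced if it has no two equal adjacent letters and either has
length one or has different first and last letters. -/
def Reduced {S : Type*} (w : List S) : Prop :=
  w.Chain' (· ≠ ·) ∧ (w.length = 1 ∨ w.head? ≠ w.getLast?)

/-- `IsReduction w u` : the reduced word `u` is obtainable from `w` by a finite
(possibly empty) sequence of one-step reductions, i.e. `u = r(w)`. -/
def IsReduction {S : Type*} (w u : List S) : Prop :=
  Relation.ReflTransGen Step w u ∧ Reduced u

open Classical in
/-- The restriction `w|A` of a word to a sub-alphabet `A`: delete all letters not in `A`. -/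
noncomputable def restrictWord {S : Type*} (w : List S) (A : Set S) : List S :=
  w.filter fun a => decide (a ∈ A)

/-- A word is crossing if it contains the pattern `… a … b … a … b …` with `a ≠ b`. -/
def Crossing {S : Type*} (w : List S) : Prop :=
  ∃ (i j k l : ℕ) (hij : i < j) (hjk : j < k) (hkl : k < l) (hl : l < w.length),
    w[i]'(by omega) = w[k]'(by omega) ∧ w[j]'(by omega) = w[l]'hl ∧
    w[i]'(by omega) ≠ w[j]'(by omega)

theorem crossing_iff_sublist {S : Type*} (w : List S) :
    Crossing w ↔ ∃ a b : S, a ≠ b ∧ [a, b, a, b].Sublist w := by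
  constructor
  · rintro ⟨i, j, k, l, hij, hjk, hkl, hl, h1, h2, h3⟩
    refine ⟨w[i]'(by omega), w[j]'(by omega), h3, ?_⟩
    rw [List.sublist_iff_exists_orderEmbedding_getElem?_eq]
    refine ⟨OrderEmbedding.ofStrictMono
      (fun n => if n = 0 then i else if n = 1 then j else if n = 2 then k
        else if n = 3 then l else n + w.length) ?_, ?_⟩
    · intro m n hmn
      dsimp only
      split_ifs <;> omega
    · intro ix
      match ix with
      | 0 => simp [List.getElem?_eq_getElem (show i < w.length by omega)]; exact (List.getElem?_eq_getElem (show i < w.length by omega)).symm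
      | 1 => simp [List.getElem?_eq_getElem (show j < w.length by omega)]; exact (List.getElem?_eq_getElem (show j < w.length by omega)).symm
      | 2 => simp [List.getElem?_eq_getElem (show k < w.length by omega), h1]; exact (List.getElem?_eq_getElem (show k < w.length by omega)).symm
      | 3 => simp [List.getElem?_eq_getElem hl, h2]; exact (List.getElem?_eq_getElem hl).symm
      | (n + 4) =>
        rw [List.getElem?_eq_none_iff.mpr (by simp), eq_comm, List.getElem?_eq_none_iff]
        show w.length ≤ (if n + 4 = 0 then i else if n + 4 = 1 then j else if n + 4 = 2 then k
          else if n + 4 = 3 then l else n + 4 + w.length)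
        split_ifs <;> simp_all
  · rintro ⟨a, b, hab, hsub⟩
    rw [List.sublist_iff_exists_fin_orderEmbedding_get_eq] at hsub
    obtain ⟨g, hg⟩ := hsub
    set i0 : Fin [a, b, a, b].length := ⟨0, by simp⟩
    set i1 : Fin [a, b, a, b].length := ⟨1, by simp⟩
    set i2 : Fin [a, b, a, b].length := ⟨2, by simp⟩
    set i3 : Fin [a, b, a, b].length := ⟨3, by simp⟩
    have h01 : g i0 < g i1 := g.strictMono (by simp only [i0, i1, Fin.mk_lt_mk]; omega)
    have h12 : g i1 < g i2 := g.strictMono (by simp only [i1, i2, Fin.mk_lt_mk]; omega)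
    have h23 : g i2 < g i3 := g.strictMono (by simp only [i2, i3, Fin.mk_lt_mk]; omega)
    refine ⟨g i0, g i1, g i2, g i3, h01, h12, h23, (g i3).2, ?_, ?_, ?_⟩
    · have e0 := hg i0; have e2 := hg i2
      simp only [List.get_eq_getElem] at e0 e2
      rw [← e0, ← e2]; rfl
    · have e1 := hg i1; have e3 := hg i3
      simp only [List.get_eq_getElem] at e1 e3
      rw [← e1, ← e3]; rfl
    · have e0 := hg i0; have e1 := hg i1
      simp only [List.get_eq_getElem] at e0 e1
      rw [← e0, ← e1]; exact hab

/-- For a crossing word `w` on `S` and any `f : S → T`, either `f(w)` is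
crossing or some fiber restriction `w | f⁻¹({t})` is defined and crossing. -/
theorem crossing_map_or_fiber {S T : Type*} (f : S → T) (w : List S) (hw : w ≠ [])
    (hc : Crossing w) :
    Crossing (w.map f) ∨
      ∃ t : T, (∃ a ∈ w, a ∈ f ⁻¹' {t}) ∧ Crossing (restrictWord w (f ⁻¹' {t})) := by
  rw [crossing_iff_sublist] at hc
  obtain ⟨a, b, hab, hsub⟩ := hc
  classical
  by_cases h : f a = f b
  · right
    refine ⟨f a, ⟨a, hsub.subset (by simp), rfl⟩, ?_⟩
    rw [crossing_iff_sublist]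
    refine ⟨a, b, hab, ?_⟩
    have := hsub.filter (fun x => decide (x ∈ f ⁻¹' {f a}))
    simpa [restrictWord, h] using this
  · left
    rw [crossing_iff_sublist]
    exact ⟨f a, f b, h, by simpa using hsub.map f⟩
end

section
/- Let w be a pangrammatic word on a finite alphabet S, let f : S → T and g : T → U be surjections, and let t ∈ T. Then r( r( w | (g∘f)⁻¹(g(t)) ) | f⁻¹(t) ) = r( w | f⁻¹(t) ), all restrictions being defined. (This is the third coassociativity identity in the proof that the word species with the decomposition maps Δ_f forms a cooperad.) -/
section Aux

open List

variable {S : Type*}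

open Classical in
noncomputable def nfAux (d : List S) : List S :=
  if 2 ≤ d.length ∧ d.head? = d.getLast? then d.dropLast else d

open Classical in
noncomputable def nf (w : List S) : List S :=
  nfAux (w.destutter (· ≠ ·))

section Destutter

variable [inst : DecidableRel (fun a b : S => a ≠ b)]

theorem destutter'_head? : ∀ (l : List S) (a : S),
    (l.destutter' (· ≠ ·) a).head? = some a
  | [], a => rfl
  | b :: l, a => by
    rw [destutter'_cons]
    split_ifs with h
    · rfl
    · exact destutter'_head? l a

theorem destutter'_pair (v : List S) (b : S) : ∀ (u : List S) (a : S),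
    ((u ++ b :: b :: v).destutter' (· ≠ ·) a) = ((u ++ b :: v).destutter' (· ≠ ·) a)
  | [], a => by
    by_cases h : a ≠ b
    · rw [nil_append, nil_append, destutter'_cons_pos _ h, destutter'_cons_pos _ h,
        destutter'_cons_neg _ (by simp)]
    · rw [nil_append, nil_append, destutter'_cons_neg _ h, destutter'_cons_neg _ (by simpa using h)]
  | c :: u, a => by
    by_cases h : a ≠ c
    · rw [cons_append, cons_append, destutter'_cons_pos _ h, destutter'_cons_pos _ h,
        destutter'_pair v b u c]
    · rw [cons_append, cons_append, destutter'_cons_neg _ h, destutter'_cons_neg _ h,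
        destutter'_pair v b u a]

theorem destutter'_concat (x : S) : ∀ (l : List S) (a : S),
    ((l.destutter' (· ≠ ·) a).getLast? = some x ∧
      (l ++ [x]).destutter' (· ≠ ·) a = l.destutter' (· ≠ ·) a) ∨
    ((l.destutter' (· ≠ ·) a).getLast? ≠ some x ∧
      (l ++ [x]).destutter' (· ≠ ·) a = l.destutter' (· ≠ ·) a ++ [x])
  | [], a => by
    by_cases h : a = x
    · subst h; simp
    · right
      constructor
      · simp [h]
      · simp [destutter'_singleton, h]
  | b :: l, a => by
    by_cases h : a ≠ b
    · rw [cons_append, destutter'_cons_pos _ h, destutter'_cons_pos _ h]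
      have hne := destutter'_ne_nil (R := (· ≠ ·)) (l := l) (a := b)
      have hcons : ∀ c : S, (c :: destutter' (· ≠ ·) b l).getLast? =
          (destutter' (· ≠ ·) b l).getLast? := by
        intro c
        obtain ⟨d, m, hm⟩ := List.exists_cons_of_ne_nil hne
        rw [hm, getLast?_cons_cons]
      rcases destutter'_concat x l b with ⟨h1, h2⟩ | ⟨h1, h2⟩
      · left
        rw [hcons, h2]
        exact ⟨h1, rfl⟩
      · right
        rw [hcons, h2]
        exact ⟨h1, rfl⟩
    · rw [cons_append, destutter'_cons_neg _ h, destutter'_cons_neg _ h]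
      exact destutter'_concat x l a

end Destutter

/-- A word of length ≥ 2 with equal first and last letters decomposes as `a :: m ++ [a]`. -/
theorem decomp_head_last {w : List S} (h2 : 2 ≤ w.length) (hh : w.head? = w.getLast?) :
    ∃ (a : S) (m : List S), w = a :: (m ++ [a]) := by
  match w, h2, hh with
  | a :: b :: l, _, hh =>
    refine ⟨a, (b :: l).dropLast, ?_⟩
    have hne : b :: l ≠ [] := by simp
    have hL : (b :: l).getLast hne = a := by
      have h1 : (a :: b :: l).getLast? = some ((b :: l).getLast hne) := by
        rw [List.getLast?_cons_cons, List.getLast?_eq_getLast hne]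
      rw [← hh] at h1
      simpa using h1.symm
    have h3 := List.dropLast_concat_getLast hne
    rw [hL] at h3
    rw [h3]

open Classical in
theorem nf_step {w v : List S} (h : Step w v) : nf w = nf v := by
  classical
  rcases h with ⟨u₁, a, u₂, hw, hv⟩ | ⟨h2, hh, hv⟩
  · -- pair contraction: destutters are equal
    subst hw hv
    have : (u₁ ++ [a, a] ++ u₂).destutter (· ≠ ·) = (u₁ ++ [a] ++ u₂).destutter (· ≠ ·) := by
      cases u₁ with
      | nil =>
        simp only [List.nil_append]
        show (a :: a :: u₂).destutter (· ≠ ·) = (a :: u₂).destutter (· ≠ ·)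
        rw [List.destutter_cons', List.destutter_cons',
          List.destutter'_cons_neg _ (by simp)]
      | cons c u₁' =>
        simp only [List.cons_append, List.append_assoc]
        rw [List.destutter_cons', List.destutter_cons']
        simpa using destutter'_pair u₂ a (u₁' ) c
    unfold nf
    rw [this]
  · obtain ⟨a, m, hwam⟩ := decomp_head_last h2 hh
    have hva : v = a :: m := by
      rw [hv, hwam, show a :: (m ++ [a]) = (a :: m) ++ [a] from by simp,
        List.dropLast_concat]
    set D := m.destutter' (· ≠ ·) a with hD
    have hDv : v.destutter (· ≠ ·) = D := by rw [hva, List.destutter_cons']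
    have hDhead : D.head? = some a := destutter'_head? m a
    have hDne : D ≠ [] := List.destutter'_ne_nil m (· ≠ ·)
    have hw' : w.destutter (· ≠ ·) = (m ++ [a]).destutter' (· ≠ ·) a := by
      rw [hwam, List.destutter_cons']
    rcases destutter'_concat a m a with ⟨h1, heq2⟩ | ⟨h1, heq⟩
    · unfold nf
      rw [hw', heq2, hDv]
    · -- destutter w = D ++ [a]
      unfold nf nfAux
      rw [hw', heq, hDv, ← hD]
      have hlen : 2 ≤ (D ++ [a]).length := by
        have := List.length_pos_iff.mpr hDne
        simp
        omega
      have hhead : (D ++ [a]).head? = some a := by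
        obtain ⟨d, m', hm⟩ := List.exists_cons_of_ne_nil hDne
        have : d = a := by rw [hm] at hDhead; simpa using hDhead
        rw [hm, this]; rfl
      have hlast : (D ++ [a]).getLast? = some a := List.getLast?_concat
      rw [if_pos ⟨hlen, by rw [hhead, hlast]⟩, List.dropLast_concat,
        if_neg ?_]
      rintro ⟨-, hc⟩
      exact h1 (by rw [← hDhead, hc])

theorem nf_reflTransGen {w v : List S} (h : Relation.ReflTransGen Step w v) : nf w = nf v := by
  induction h with
  | refl => rfl
  | tail _ hstep ih => exact ih.trans (nf_step hstep)

open Classical in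
theorem nf_of_reduced {u : List S} (h : Reduced u) : nf u = u := by
  classical
  obtain ⟨hchain, hcond⟩ := h
  unfold nf nfAux
  rw [List.destutter_of_isChain _ _ hchain, if_neg]
  rintro ⟨hlen, hhl⟩
  rcases hcond with h1 | h1
  · omega
  · exact h1 hhl

theorem isReduction_eq_nf {w u : List S} (h : IsReduction w u) : u = nf w := by
  rw [nf_reflTransGen h.1, nf_of_reduced h.2]

/-- filtering maps a step to zero or one steps -/
theorem filter_step (p : S → Bool) {w v : List S} (h : Step w v) :
    Relation.ReflTransGen Step (w.filter p) (v.filter p) := by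
  rcases h with ⟨u₁, a, u₂, hw, hv⟩ | ⟨h2, hh, hv⟩
  · subst hw hv
    by_cases hpa : p a = true
    · refine Relation.ReflTransGen.single (Or.inl ⟨u₁.filter p, a, u₂.filter p, ?_, ?_⟩) <;>
        simp [List.filter_append, hpa]
    · apply Relation.ReflTransGen.refl.trans
      have : ∀ u : List S, ((u₁ ++ [a, a] ++ u₂).filter p) = ((u₁ ++ [a] ++ u₂).filter p) := by
        intro u; simp [List.filter_append, hpa]
      rw [this []]
  · obtain ⟨a, m, hwam⟩ := decomp_head_last h2 hh
    have hva : v = a :: m := by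
      rw [hv, hwam, show a :: (m ++ [a]) = (a :: m) ++ [a] from by simp,
        List.dropLast_concat]
    subst hwam hva
    by_cases hpa : p a = true
    · have hfw : (a :: (m ++ [a])).filter p = (a :: m.filter p) ++ [a] := by
        simp [List.filter_append, hpa]
      refine Relation.ReflTransGen.single (Or.inr ⟨?_, ?_, ?_⟩)
      · rw [hfw]; simp
      · rw [hfw, List.getLast?_concat, List.cons_append]
        rfl
      · have hfv : (a :: m).filter p = a :: m.filter p := by simp [hpa]
        rw [hfw, hfv, List.dropLast_concat]
    · have : (a :: (m ++ [a])).filter p = (a :: m).filter p := by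
        simp [List.filter_append, hpa]
      rw [this]

theorem filter_reflTransGen (p : S → Bool) {w v : List S}
    (h : Relation.ReflTransGen Step w v) :
    Relation.ReflTransGen Step (w.filter p) (v.filter p) := by
  induction h with
  | refl => exact Relation.ReflTransGen.refl
  | tail _ hstep ih => exact ih.trans (filter_step p hstep)

open Classical in
theorem restrict_restrict {A B : Set S} (hAB : A ⊆ B) (w : List S) :
    restrictWord (restrictWord w B) A = restrictWord w A := by
  unfold restrictWord
  rw [List.filter_filter]
  apply List.filter_congr
  intro a _
  by_cases h : a ∈ A
  · simp [h, hAB h]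
  · simp [h]

end Aux

/-- The third coassociativity identity for the word cooperad: for a
pangrammatic word `w` on `S`, surjections `f : S → T`, `g : T → U`, and
`t ∈ T`, one has `r(r(w | (g∘f)⁻¹(g(t))) | f⁻¹(t)) = r(w | f⁻¹(t))`. -/
theorem coassociativity_third {S T U : Type*} [Fintype S] [Fintype T] [Fintype U]
    (f : S → T) (g : T → U) (hf : Function.Surjective f) (hg : Function.Surjective g)
    (w : List S) (hw : w ≠ []) (hpan : ∀ s : S, s ∈ w) (t : T)
    (y : List S) (hy : IsReduction (restrictWord w ((g ∘ f) ⁻¹' {g t})) y)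
    (p : List S) (hp : IsReduction (restrictWord y (f ⁻¹' {t})) p)
    (q : List S) (hq : IsReduction (restrictWord w (f ⁻¹' {t})) q) :
    p = q := by
  classical
  set A : Set S := f ⁻¹' {t} with hA
  set B : Set S := (g ∘ f) ⁻¹' {g t} with hB
  have hAB : A ⊆ B := by
    intro s hs
    simp only [hA, Set.mem_preimage, Set.mem_singleton_iff] at hs
    simp only [hB, Set.mem_preimage, Set.mem_singleton_iff, Function.comp_apply, hs]
  have h1 : Relation.ReflTransGen Step
      (restrictWord (restrictWord w B) A) (restrictWord y A) :=
    filter_reflTransGen _ hy.1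
  rw [restrict_restrict hAB] at h1
  have hkey : nf (restrictWord w A) = nf (restrictWord y A) := nf_reflTransGen h1
  rw [isReduction_eq_nf hp, isReduction_eq_nf hq, hkey]
end
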